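/- AMSE floor at high SNR: let A ∈ ℂ^{N×S} and let R ∈ ℂ^{N×N} be Hermitian positive definite. Then the limit as t → 0⁺ of tr((I_S + Aᴴ·(t·I_N + R)⁻¹·A)⁻¹) equals tr((I_S + Aᴴ·R⁻¹·A)⁻¹), and this limiting value is strictly positive. Hence the sum MAMSE does not tend to zero as the noise variance σ² → 0 when the channel estimation error term R is nonzero: a strictly positive sum AMSE floor exists. -/

import Mathlib

open Matrix ComplexOrder Filter Topology

/-- **AMSE floor at high SNR.** For `A ∈ ℂ^{N×S}` and `R` Hermitian positive definite,
`tr((I + Aᴴ (t I + R)⁻¹ A)⁻¹) → tr((I + Aᴴ R⁻¹ A)⁻¹)` as `t → 0⁺`, and the limit is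
strictly positive: a strictly positive sum AMSE floor exists as the noise variance
tends to zero. -/
theorem AMSE_floor_high_SNR {N S : ℕ} (hN : 0 < N) (hS : 0 < S)
    (A : Matrix (Fin N) (Fin S) ℂ)
    (R : Matrix (Fin N) (Fin N) ℂ) (hR : R.PosDef) :
    Tendsto
      (fun t : ℝ =>
        ((((1 : Matrix (Fin S) (Fin S) ℂ)
          + Aᴴ * (t • (1 : Matrix (Fin N) (Fin N) ℂ) + R)⁻¹ * A)⁻¹).trace).re)
      (nhdsWithin 0 (Set.Ioi 0))
      (nhds ((((1 : Matrix (Fin S) (Fin S) ℂ) + Aᴴ * R⁻¹ * A)⁻¹).trace).re) ∧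
    0 < ((((1 : Matrix (Fin S) (Fin S) ℂ) + Aᴴ * R⁻¹ * A)⁻¹).trace).re := by
  have hinv : Ring.inverse = (Inv.inv : ℂ → ℂ) := funext Ring.inverse_eq_inv
  -- `1 + Aᴴ R⁻¹ A` is positive definite
  have hK : ((1 : Matrix (Fin S) (Fin S) ℂ) + Aᴴ * R⁻¹ * A).PosDef :=
    Matrix.PosDef.add_posSemidef Matrix.PosDef.one
      (hR.inv.posSemidef.conjTranspose_mul_mul_same A)
  constructor
  · -- continuity at 0
    have c1 : ContinuousAt (fun t : ℝ => t • (1 : Matrix (Fin N) (Fin N) ℂ) + R) 0 :=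
      ((continuous_id.smul continuous_const).add continuous_const).continuousAt
    have c2 : ContinuousAt (Inv.inv : Matrix (Fin N) (Fin N) ℂ → _) R := by
      apply continuousAt_matrix_inv
      rw [hinv]
      exact continuousAt_inv₀ hR.det_pos.ne'
    have c3 : Continuous fun M : Matrix (Fin N) (Fin N) ℂ =>
        (1 : Matrix (Fin S) (Fin S) ℂ) + Aᴴ * M * A :=
      continuous_const.add ((continuous_const.matrix_mul continuous_id).matrix_mul
        continuous_const)
    have c4 : ContinuousAt (Inv.inv : Matrix (Fin S) (Fin S) ℂ → _)
        ((1 : Matrix (Fin S) (Fin S) ℂ) + Aᴴ * R⁻¹ * A) := by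
      apply continuousAt_matrix_inv
      rw [hinv]
      exact continuousAt_inv₀ hK.det_pos.ne'
    have c5 : Continuous fun M : Matrix (Fin S) (Fin S) ℂ => (M.trace).re :=
      Complex.continuous_re.comp (Continuous.matrix_trace continuous_id)
    have h0 : (0 : ℝ) • (1 : Matrix (Fin N) (Fin N) ℂ) + R = R := by simp
    have h2 : ContinuousAt (fun t : ℝ => (t • (1 : Matrix (Fin N) (Fin N) ℂ) + R)⁻¹) 0 :=
      ContinuousAt.comp (by simpa using c2) c1
    have h3 : ContinuousAt (fun t : ℝ =>
        (1 : Matrix (Fin S) (Fin S) ℂ) + Aᴴ * (t • (1 : Matrix (Fin N) (Fin N) ℂ) + R)⁻¹ * A) 0 :=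
      ContinuousAt.comp (g := fun M => (1 : Matrix (Fin S) (Fin S) ℂ) + Aᴴ * M * A)
        c3.continuousAt h2
    have h4 : ContinuousAt (fun t : ℝ =>
        ((1 : Matrix (Fin S) (Fin S) ℂ) + Aᴴ * (t • (1 : Matrix (Fin N) (Fin N) ℂ) + R)⁻¹ * A)⁻¹) 0 :=
      ContinuousAt.comp (by simpa [h0] using c4) h3
    have key : ContinuousAt
        (fun t : ℝ =>
          ((((1 : Matrix (Fin S) (Fin S) ℂ)
            + Aᴴ * (t • (1 : Matrix (Fin N) (Fin N) ℂ) + R)⁻¹ * A)⁻¹).trace).re) 0 :=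
      ContinuousAt.comp (g := fun M : Matrix (Fin S) (Fin S) ℂ => (M.trace).re)
        c5.continuousAt h4
    have := key.tendsto.mono_left (nhdsWithin_le_nhds (s := Set.Ioi (0:ℝ)))
    simpa using this
  · -- positivity of the trace of the inverse of a positive definite matrix
    have hKinv : ((1 : Matrix (Fin S) (Fin S) ℂ) + Aᴴ * R⁻¹ * A)⁻¹.PosDef := hK.inv
    set M := ((1 : Matrix (Fin S) (Fin S) ℂ) + Aᴴ * R⁻¹ * A)⁻¹ with hM
    have hdiag : ∀ i : Fin S, 0 < (M i i).re := by
      intro i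
      have hx : (Pi.single i 1 : Fin S → ℂ) ≠ 0 := by
        intro h
        have := congrFun h i
        simp at this
      have := hKinv.dotProduct_mulVec_pos (x := Pi.single i 1) hx
      have hval : star (Pi.single i 1 : Fin S → ℂ) ⬝ᵥ (M *ᵥ Pi.single i 1) = M i i := by
        simp only [dotProduct, mulVec, Pi.single_apply, star, Pi.star_apply,
          RCLike.star_def]
        rw [Finset.sum_eq_single i]
        · simp; exact one_mul (M i i)
        · intro b _ hb; simp [hb]; exact Or.inl rfl
        · simp
      rw [hval] at this
      exact (Complex.lt_def.mp this).1
    have : M.trace = ∑ i, M i i := rfl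
    rw [this]
    rw [Complex.re_sum]
    exact Finset.sum_pos (fun i _ => hdiag i) (Finset.univ_nonempty_iff.mpr ⟨⟨0, hS⟩⟩)
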